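/- (Proposition 2, part 1.) For any finite alphabets 𝒮, 𝒳₁, 𝒳₂, 𝒴, any state pmf Q_S on 𝒮 and any channel transition kernel W(y|x₁,x₂,s), the outer bound region R^out is a convex subset of ℝ². -/

import Mathlib

open scoped BigOperators
open Classical

noncomputable section

/-- Probability that the random variable `X` equals `x` under the pmf `p`. -/
def pr {Ω α : Type*} [Fintype Ω] (p : Ω → ℝ) (X : Ω → α) (x : α) : ℝ :=
  ∑ ω : Ω, if X ω = x then p ω else 0

/-- Shannon entropy (in bits), with the convention `0 · log₂ 0 = 0`. -/
def ent {Ω α : Type*} [Fintype Ω] (p : Ω → ℝ) (X : Ω → α) : ℝ :=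
  -∑ x ∈ Finset.univ.image X, pr p X x * Real.logb 2 (pr p X x)

/-- Conditional entropy `H(X|Y) = H(X,Y) - H(Y)`. -/
def condEnt {Ω α β : Type*} [Fintype Ω] (p : Ω → ℝ) (X : Ω → α) (Y : Ω → β) : ℝ :=
  ent p (fun ω => (X ω, Y ω)) - ent p Y

/-- Mutual information `I(X;Y) = H(X) + H(Y) - H(X,Y)`. -/
def mi {Ω α β : Type*} [Fintype Ω] (p : Ω → ℝ) (X : Ω → α) (Y : Ω → β) : ℝ :=
  ent p X + ent p Y - ent p (fun ω => (X ω, Y ω))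

/-- Conditional mutual information `I(X;Y|Z) = H(X,Z) + H(Y,Z) - H(X,Y,Z) - H(Z)`. -/
def cmi {Ω α β γ : Type*} [Fintype Ω] (p : Ω → ℝ) (X : Ω → α) (Y : Ω → β) (Z : Ω → γ) : ℝ :=
  ent p (fun ω => (X ω, Z ω)) + ent p (fun ω => (Y ω, Z ω))
    - ent p (fun ω => (X ω, Y ω, Z ω)) - ent p Z

/-- `p` is a probability mass function on the finite sample space `Ω`. -/
def IsPMF {Ω : Type*} [Fintype Ω] (p : Ω → ℝ) : Prop :=
  (∀ ω, 0 ≤ p ω) ∧ ∑ ω : Ω, p ω = 1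

/-- The random variables `X` and `Y` are independent under `p`. -/
def IndepRV {Ω α β : Type*} [Fintype Ω] (p : Ω → ℝ) (X : Ω → α) (Y : Ω → β) : Prop :=
  ∀ x y, pr p (fun ω => (X ω, Y ω)) (x, y) = pr p X x * pr p Y y

end

noncomputable section
/-! The outer bound `R^out` of Theorem 2.  The joint sample space is the product of the
alphabets `𝒮 × 𝒱 × 𝒳₁ × 𝒳₂ × 𝒴`, with the random variables being the coordinate
projections, and the joint pmf having the product form
`Q_S(s)·P_{X₂}(x₂)·P_{X₁|X₂}(x₁|x₂)·P_{V|S,X₁,X₂}(v|s,x₁,x₂)·W(y|x₁,x₂,s)`. -/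

/-- The product-form joint pmf on `𝒮 × 𝒱 × 𝒳₁ × 𝒳₂ × 𝒴`. -/
def jointP {𝒮 𝒱 𝒳₁ 𝒳₂ 𝒴 : Type*}
    (QS : 𝒮 → ℝ) (W : 𝒴 → 𝒳₁ → 𝒳₂ → 𝒮 → ℝ)
    (PX2 : 𝒳₂ → ℝ) (PX12 : 𝒳₁ → 𝒳₂ → ℝ) (PV : 𝒮 → 𝒳₁ → 𝒳₂ → 𝒱 → ℝ) :
    𝒮 × 𝒱 × 𝒳₁ × 𝒳₂ × 𝒴 → ℝ :=
  fun q => QS q.1 * PX2 q.2.2.2.1 * PX12 q.2.2.1 q.2.2.2.1 *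
    PV q.1 q.2.2.1 q.2.2.2.1 q.2.1 * W q.2.2.2.2 q.2.2.1 q.2.2.2.1 q.1

/-- `(Rc, R1)` is witnessed in `R^out` by the auxiliary alphabet `𝒱`. -/
def RoutW {𝒮 𝒳₁ 𝒳₂ 𝒴 : Type*} [Fintype 𝒮] [Fintype 𝒳₁] [Fintype 𝒳₂] [Fintype 𝒴]
    (QS : 𝒮 → ℝ) (W : 𝒴 → 𝒳₁ → 𝒳₂ → 𝒮 → ℝ)
    (𝒱 : Type) [Fintype 𝒱] (Rc R1 : ℝ) : Prop :=
  ∃ (PX2 : 𝒳₂ → ℝ) (PX12 : 𝒳₁ → 𝒳₂ → ℝ) (PV : 𝒮 → 𝒳₁ → 𝒳₂ → 𝒱 → ℝ),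
    (∀ x2, 0 ≤ PX2 x2) ∧ (∑ x2, PX2 x2 = 1) ∧
    (∀ x1 x2, 0 ≤ PX12 x1 x2) ∧ (∀ x2, ∑ x1, PX12 x1 x2 = 1) ∧
    (∀ s x1 x2 v, 0 ≤ PV s x1 x2 v) ∧ (∀ s x1 x2, ∑ v, PV s x1 x2 v = 1) ∧
    (0 ≤ mi (jointP QS W PX2 PX12 PV) (fun q => (q.2.1, q.2.2.2.1)) (fun q => q.2.2.2.2)
          - mi (jointP QS W PX2 PX12 PV) (fun q => (q.2.1, q.2.2.2.1)) (fun q => q.1)) ∧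
    (R1 ≤ cmi (jointP QS W PX2 PX12 PV) (fun q => q.2.2.1) (fun q => q.2.2.2.2)
            (fun q => (q.2.1, q.2.2.2.1))) ∧
    (Rc + R1 ≤
      mi (jointP QS W PX2 PX12 PV) (fun q => (q.2.1, q.2.2.1, q.2.2.2.1)) (fun q => q.2.2.2.2)
        - mi (jointP QS W PX2 PX12 PV) (fun q => (q.2.1, q.2.2.1, q.2.2.2.1)) (fun q => q.1))

/-- The outer bound `R^out` as a subset of `ℝ²`. -/
def Rout {𝒮 𝒳₁ 𝒳₂ 𝒴 : Type*} [Fintype 𝒮] [Fintype 𝒳₁] [Fintype 𝒳₂] [Fintype 𝒴]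
    (QS : 𝒮 → ℝ) (W : 𝒴 → 𝒳₁ → 𝒳₂ → 𝒮 → ℝ) : Set (ℝ × ℝ) :=
  {R | 0 ≤ R.1 ∧ 0 ≤ R.2 ∧ ∃ (𝒱 : Type) (_ : Fintype 𝒱), RoutW QS W 𝒱 R.1 R.2}

end


noncomputable section AuxEnt

variable {Ω α : Type*} [Fintype Ω]

lemma pr_nonneg (p : Ω → ℝ) (hp : ∀ ω, 0 ≤ p ω) (X : Ω → α) (x : α) : 0 ≤ pr p X x := by
  apply Finset.sum_nonneg
  intro ω _
  split
  · exact hp ω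
  · exact le_refl 0

lemma sum_pr [Fintype α] (p : Ω → ℝ) (X : Ω → α) : ∑ x : α, pr p X x = ∑ ω, p ω := by
  unfold pr
  rw [Finset.sum_comm]
  refine Finset.sum_congr rfl fun ω _ => ?_
  rw [Finset.sum_ite_eq Finset.univ (X ω) (fun _ => p ω)]
  simp

lemma ent_eq_univ [Fintype α] (p : Ω → ℝ) (X : Ω → α) :
    ent p X = -∑ x : α, pr p X x * Real.logb 2 (pr p X x) := by
  unfold ent
  congr 1
  refine Finset.sum_subset (Finset.subset_univ _) ?_
  intro x _ hx
  have h0 : pr p X x = 0 := by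
    apply Finset.sum_eq_zero; intro ω _
    rw [if_neg]
    intro h; exact hx (Finset.mem_image.2 ⟨ω, Finset.mem_univ ω, h⟩)
  simp [h0]

lemma ent_congr {Ω' : Type*} [Fintype Ω'] [Fintype α] {p : Ω → ℝ} {q : Ω' → ℝ}
    {X : Ω → α} {Y : Ω' → α} (h : ∀ x, pr p X x = pr q Y x) : ent p X = ent q Y := by
  rw [ent_eq_univ, ent_eq_univ]
  congr 1
  exact Finset.sum_congr rfl fun x _ => by rw [h]

lemma mul_logb_mul {a : ℝ} (ha : 0 < a) {t : ℝ} (ht : 0 ≤ t) :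
    (a * t) * Real.logb 2 (a * t)
      = t * (a * Real.logb 2 a) + a * (t * Real.logb 2 t) := by
  rcases ht.eq_or_lt with h | h
  · simp [← h]
  · rw [Real.logb_mul ha.ne' h.ne']; ring

end AuxEnt

noncomputable section Mix

variable {Ω₁ Ω₂ Ω : Type*} [Fintype Ω₁] [Fintype Ω₂] [Fintype Ω]
  {p : Ω₁ → ℝ} {q : Ω₂ → ℝ} {m : Ω → ℝ} {a b : ℝ} {ι₁ : Ω₁ → Ω} {ι₂ : Ω₂ → Ω}

lemma pr_mix (hsum : ∀ F : Ω → ℝ, ∑ ω, F ω = (∑ ω, F (ι₁ ω)) + ∑ ω, F (ι₂ ω))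
    (hm1 : ∀ ω, m (ι₁ ω) = a * p ω) (hm2 : ∀ ω, m (ι₂ ω) = b * q ω)
    {γ : Type*} (Z : Ω → γ) (Z₁ : Ω₁ → γ) (Z₂ : Ω₂ → γ)
    (hZ₁ : ∀ ω, Z (ι₁ ω) = Z₁ ω) (hZ₂ : ∀ ω, Z (ι₂ ω) = Z₂ ω) (x : γ) :
    pr m Z x = a * pr p Z₁ x + b * pr q Z₂ x := by
  unfold pr
  rw [hsum fun ω => if Z ω = x then m ω else 0, Finset.mul_sum, Finset.mul_sum]
  congr 1
  · exact Finset.sum_congr rfl fun ω _ => by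
      rw [hZ₁, hm1]; split <;> simp
  · exact Finset.sum_congr rfl fun ω _ => by
      rw [hZ₂, hm2]; split <;> simp

lemma ent_mix {γ₁ γ₂ γ : Type*} [Fintype γ₁] [Fintype γ₂] [Fintype γ]
    (hsum : ∀ F : Ω → ℝ, ∑ ω, F ω = (∑ ω, F (ι₁ ω)) + ∑ ω, F (ι₂ ω))
    (hm1 : ∀ ω, m (ι₁ ω) = a * p ω) (hm2 : ∀ ω, m (ι₂ ω) = b * q ω)
    (hp0 : ∀ ω, 0 ≤ p ω) (hp1 : ∑ ω, p ω = 1)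
    (hq0 : ∀ ω, 0 ≤ q ω) (hq1 : ∑ ω, q ω = 1)
    (ha : 0 < a) (hb : 0 < b)
    (Z : Ω → γ) (Z₁ : Ω₁ → γ₁) (Z₂ : Ω₂ → γ₂) (g₁ : γ₁ → γ) (g₂ : γ₂ → γ)
    (hg₁ : Function.Injective g₁) (hg₂ : Function.Injective g₂)
    (hdisj : ∀ y₁ y₂, g₁ y₁ ≠ g₂ y₂)
    (hZ₁ : ∀ ω, Z (ι₁ ω) = g₁ (Z₁ ω)) (hZ₂ : ∀ ω, Z (ι₂ ω) = g₂ (Z₂ ω)) :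
    ent m Z = a * ent p Z₁ + b * ent q Z₂
      - (a * Real.logb 2 a + b * Real.logb 2 b) := by
  have key1 : ∀ y, pr m Z (g₁ y) = a * pr p Z₁ y := by
    intro y
    unfold pr
    rw [hsum fun ω => if Z ω = g₁ y then m ω else 0]
    have h2 : (∑ ω : Ω₂, if Z (ι₂ ω) = g₁ y then m (ι₂ ω) else 0) = 0 :=
      Finset.sum_eq_zero fun ω _ => if_neg (by rw [hZ₂]; exact fun hc => hdisj y (Z₂ ω) hc.symm)
    rw [h2, add_zero, Finset.mul_sum]
    refine Finset.sum_congr rfl fun ω _ => ?_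
    rw [hZ₁, hm1]
    by_cases h : Z₁ ω = y
    · rw [if_pos (by rw [h]), if_pos h]
    · rw [if_neg (fun hc => h (hg₁ hc)), if_neg h, mul_zero]
  have key2 : ∀ y, pr m Z (g₂ y) = b * pr q Z₂ y := by
    intro y
    unfold pr
    rw [hsum fun ω => if Z ω = g₂ y then m ω else 0]
    have h2 : (∑ ω : Ω₁, if Z (ι₁ ω) = g₂ y then m (ι₁ ω) else 0) = 0 :=
      Finset.sum_eq_zero fun ω _ => if_neg (by rw [hZ₁]; exact fun hc => hdisj (Z₁ ω) y hc)
    rw [h2, zero_add, Finset.mul_sum]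
    refine Finset.sum_congr rfl fun ω _ => ?_
    rw [hZ₂, hm2]
    by_cases h : Z₂ ω = y
    · rw [if_pos (by rw [h]), if_pos h]
    · rw [if_neg (fun hc => h (hg₂ hc)), if_neg h, mul_zero]
  have key0 : ∀ x : γ, x ∉ (Finset.univ.image g₁ ∪ Finset.univ.image g₂) → pr m Z x = 0 := by
    intro x hx
    unfold pr
    rw [hsum fun ω => if Z ω = x then m ω else 0]
    rw [Finset.sum_eq_zero fun ω _ => if_neg (by
        rw [hZ₁]; intro hc
        exact hx (Finset.mem_union_left _ (Finset.mem_image.2 ⟨Z₁ ω, Finset.mem_univ _, hc⟩))),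
      Finset.sum_eq_zero fun ω _ => if_neg (by
        rw [hZ₂]; intro hc
        exact hx (Finset.mem_union_right _ (Finset.mem_image.2 ⟨Z₂ ω, Finset.mem_univ _, hc⟩))),
      add_zero]
  have hdd : Disjoint (Finset.univ.image g₁) (Finset.univ.image g₂) := by
    rw [Finset.disjoint_left]
    rintro x h1 h2
    obtain ⟨y₁, _, rfl⟩ := Finset.mem_image.1 h1
    obtain ⟨y₂, _, he⟩ := Finset.mem_image.1 h2
    exact hdisj y₁ y₂ he.symm
  have hsplit : (∑ x : γ, pr m Z x * Real.logb 2 (pr m Z x))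
      = (∑ y : γ₁, (a * pr p Z₁ y) * Real.logb 2 (a * pr p Z₁ y))
        + ∑ y : γ₂, (b * pr q Z₂ y) * Real.logb 2 (b * pr q Z₂ y) := by
    rw [← Finset.sum_subset (Finset.subset_univ (Finset.univ.image g₁ ∪ Finset.univ.image g₂))
        (fun x _ hx => by rw [key0 x hx]; simp)]
    rw [Finset.sum_union hdd,
      Finset.sum_image (fun y _ y' _ h => hg₁ h), Finset.sum_image (fun y _ y' _ h => hg₂ h)]
    congr 1
    · exact Finset.sum_congr rfl fun y _ => by rw [key1]
    · exact Finset.sum_congr rfl fun y _ => by rw [key2]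
  have t1 : (∑ y : γ₁, (a * pr p Z₁ y) * Real.logb 2 (a * pr p Z₁ y))
      = a * Real.logb 2 a + a * ∑ y : γ₁, pr p Z₁ y * Real.logb 2 (pr p Z₁ y) := by
    rw [Finset.sum_congr rfl fun y _ => mul_logb_mul ha (pr_nonneg p hp0 Z₁ y),
      Finset.sum_add_distrib, ← Finset.sum_mul, ← Finset.mul_sum, sum_pr, hp1, one_mul]
  have t2 : (∑ y : γ₂, (b * pr q Z₂ y) * Real.logb 2 (b * pr q Z₂ y))
      = b * Real.logb 2 b + b * ∑ y : γ₂, pr q Z₂ y * Real.logb 2 (pr q Z₂ y) := by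
    rw [Finset.sum_congr rfl fun y _ => mul_logb_mul hb (pr_nonneg q hq0 Z₂ y),
      Finset.sum_add_distrib, ← Finset.sum_mul, ← Finset.mul_sum, sum_pr, hq1, one_mul]
  rw [ent_eq_univ, ent_eq_univ, ent_eq_univ, hsplit, t1, t2]
  ring

lemma ent_mix_ge {γ : Type*} [Fintype γ]
    (hsum : ∀ F : Ω → ℝ, ∑ ω, F ω = (∑ ω, F (ι₁ ω)) + ∑ ω, F (ι₂ ω))
    (hm1 : ∀ ω, m (ι₁ ω) = a * p ω) (hm2 : ∀ ω, m (ι₂ ω) = b * q ω)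
    (hp0 : ∀ ω, 0 ≤ p ω) (hq0 : ∀ ω, 0 ≤ q ω)
    (ha : 0 ≤ a) (hb : 0 ≤ b) (hab : a + b = 1)
    (Z : Ω → γ) (Z₁ : Ω₁ → γ) (Z₂ : Ω₂ → γ)
    (hZ₁ : ∀ ω, Z (ι₁ ω) = Z₁ ω) (hZ₂ : ∀ ω, Z (ι₂ ω) = Z₂ ω) :
    a * ent p Z₁ + b * ent q Z₂ ≤ ent m Z := by
  have hlog2 : (0:ℝ) < Real.log 2 := Real.log_pos one_lt_two
  have point : ∀ x : γ,
      a * -(pr p Z₁ x * Real.logb 2 (pr p Z₁ x)) + b * -(pr q Z₂ x * Real.logb 2 (pr q Z₂ x))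
        ≤ -(pr m Z x * Real.logb 2 (pr m Z x)) := by
    intro x
    have h1 := pr_nonneg p hp0 Z₁ x
    have h2 := pr_nonneg q hq0 Z₂ x
    have hc := Real.concaveOn_negMulLog.2 (Set.mem_Ici.2 h1) (Set.mem_Ici.2 h2) ha hb hab
    simp only [smul_eq_mul] at hc
    have e : ∀ t : ℝ, -(t * Real.logb 2 t) = Real.negMulLog t / Real.log 2 := by
      intro t
      rw [Real.negMulLog, Real.logb]
      ring
    rw [pr_mix hsum hm1 hm2 Z Z₁ Z₂ hZ₁ hZ₂ x, e, e, e]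
    rw [show a * (Real.negMulLog (pr p Z₁ x) / Real.log 2)
        + b * (Real.negMulLog (pr q Z₂ x) / Real.log 2)
        = (a * Real.negMulLog (pr p Z₁ x) + b * Real.negMulLog (pr q Z₂ x)) / Real.log 2 by ring]
    exact div_le_div_of_nonneg_right hc hlog2.le
  have hsumle := Finset.sum_le_sum (fun x (_ : x ∈ Finset.univ) => point x)
  rw [Finset.sum_add_distrib, ← Finset.mul_sum, ← Finset.mul_sum] at hsumle
  rw [ent_eq_univ, ent_eq_univ, ent_eq_univ]
  simpa only [Finset.sum_neg_distrib] using hsumle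
end Mix

noncomputable section JointFacts
set_option linter.unusedSectionVars false
variable {𝒮 𝒱 𝒳₁ 𝒳₂ 𝒴 : Type*} [Fintype 𝒮] [Fintype 𝒱] [Fintype 𝒳₁] [Fintype 𝒳₂] [Fintype 𝒴]
  (QS : 𝒮 → ℝ) (W : 𝒴 → 𝒳₁ → 𝒳₂ → 𝒮 → ℝ)
  (PX2 : 𝒳₂ → ℝ) (PX12 : 𝒳₁ → 𝒳₂ → ℝ) (PV : 𝒮 → 𝒳₁ → 𝒳₂ → 𝒱 → ℝ)

lemma jointP_nonneg (hQ0 : ∀ s, 0 ≤ QS s) (hW0 : ∀ y x1 x2 s, 0 ≤ W y x1 x2 s)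
    (h2 : ∀ x2, 0 ≤ PX2 x2) (h12 : ∀ x1 x2, 0 ≤ PX12 x1 x2)
    (hV : ∀ s x1 x2 v, 0 ≤ PV s x1 x2 v) (q : 𝒮 × 𝒱 × 𝒳₁ × 𝒳₂ × 𝒴) :
    0 ≤ jointP QS W PX2 PX12 PV q := by
  unfold jointP
  have h1 := hQ0 q.1
  have h5 := hW0 q.2.2.2.2 q.2.2.1 q.2.2.2.1 q.1
  have h2' := h2 q.2.2.2.1
  have h3 := h12 q.2.2.1 q.2.2.2.1
  have h4 := hV q.1 q.2.2.1 q.2.2.2.1 q.2.1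
  positivity

lemma jointP_tail_sum (hPX2 : ∑ x2, PX2 x2 = 1) (hPX12 : ∀ x2, ∑ x1, PX12 x1 x2 = 1)
    (hPV : ∀ s x1 x2, ∑ v, PV s x1 x2 v = 1) (hW : ∀ x1 x2 s, ∑ y, W y x1 x2 s = 1) (s : 𝒮) :
    ∑ r : 𝒱 × 𝒳₁ × 𝒳₂ × 𝒴,
      PX2 r.2.2.1 * PX12 r.2.1 r.2.2.1 * PV s r.2.1 r.2.2.1 r.1 * W r.2.2.2 r.2.1 r.2.2.1 s
      = 1 := by
  rw [Fintype.sum_prod_type]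
  trans (∑ v : 𝒱, ∑ x1, ∑ x2, PX2 x2 * PX12 x1 x2 * PV s x1 x2 v)
  · refine Finset.sum_congr rfl fun v _ => ?_
    rw [Fintype.sum_prod_type]
    refine Finset.sum_congr rfl fun x1 _ => ?_
    rw [Fintype.sum_prod_type]
    refine Finset.sum_congr rfl fun x2 _ => ?_
    show (∑ y : 𝒴, PX2 x2 * PX12 x1 x2 * PV s x1 x2 v * W y x1 x2 s) = _
    rw [← Finset.mul_sum, hW, mul_one]
  · rw [Finset.sum_comm]
    trans (∑ x1 : 𝒳₁, ∑ x2, PX2 x2 * PX12 x1 x2)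
    · refine Finset.sum_congr rfl fun x1 _ => ?_
      rw [Finset.sum_comm]
      refine Finset.sum_congr rfl fun x2 _ => ?_
      rw [← Finset.mul_sum, hPV, mul_one]
    · rw [Finset.sum_comm]
      trans (∑ x2 : 𝒳₂, PX2 x2)
      · exact Finset.sum_congr rfl fun x2 _ => by rw [← Finset.mul_sum, hPX12, mul_one]
      · exact hPX2

lemma jointP_sum (hPX2 : ∑ x2, PX2 x2 = 1) (hPX12 : ∀ x2, ∑ x1, PX12 x1 x2 = 1)
    (hPV : ∀ s x1 x2, ∑ v, PV s x1 x2 v = 1) (hW : ∀ x1 x2 s, ∑ y, W y x1 x2 s = 1)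
    (hQ1 : ∑ s, QS s = 1) :
    ∑ q, jointP QS W PX2 PX12 PV q = 1 := by
  rw [Fintype.sum_prod_type]
  trans (∑ s : 𝒮, QS s)
  · refine Finset.sum_congr rfl fun s _ => ?_
    show (∑ r : 𝒱 × 𝒳₁ × 𝒳₂ × 𝒴,
        QS s * PX2 r.2.2.1 * PX12 r.2.1 r.2.2.1 * PV s r.2.1 r.2.2.1 r.1
          * W r.2.2.2 r.2.1 r.2.2.1 s) = QS s
    trans (∑ r : 𝒱 × 𝒳₁ × 𝒳₂ × 𝒴,
        QS s * (PX2 r.2.2.1 * PX12 r.2.1 r.2.2.1 * PV s r.2.1 r.2.2.1 r.1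
          * W r.2.2.2 r.2.1 r.2.2.1 s))
    · exact Finset.sum_congr rfl fun r _ => by ring
    · rw [← Finset.mul_sum, jointP_tail_sum W PX2 PX12 PV hPX2 hPX12 hPV hW s, mul_one]
  · exact hQ1

lemma jointP_marg_fst (hPX2 : ∑ x2, PX2 x2 = 1) (hPX12 : ∀ x2, ∑ x1, PX12 x1 x2 = 1)
    (hPV : ∀ s x1 x2, ∑ v, PV s x1 x2 v = 1) (hW : ∀ x1 x2 s, ∑ y, W y x1 x2 s = 1) (s : 𝒮) :
    pr (jointP QS W PX2 PX12 PV) (fun q => q.1) s = QS s := by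
  unfold pr
  rw [Fintype.sum_prod_type]
  trans (∑ s' : 𝒮, if s' = s then QS s' else 0)
  · refine Finset.sum_congr rfl fun s' _ => ?_
    show (∑ r : 𝒱 × 𝒳₁ × 𝒳₂ × 𝒴,
        if s' = s then jointP QS W PX2 PX12 PV (s', r) else 0) = _
    by_cases h : s' = s
    · simp only [if_pos h]
      show (∑ r : 𝒱 × 𝒳₁ × 𝒳₂ × 𝒴,
          QS s' * PX2 r.2.2.1 * PX12 r.2.1 r.2.2.1 * PV s' r.2.1 r.2.2.1 r.1
            * W r.2.2.2 r.2.1 r.2.2.1 s') = QS s'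
      trans (∑ r : 𝒱 × 𝒳₁ × 𝒳₂ × 𝒴,
          QS s' * (PX2 r.2.2.1 * PX12 r.2.1 r.2.2.1 * PV s' r.2.1 r.2.2.1 r.1
            * W r.2.2.2 r.2.1 r.2.2.1 s'))
      · exact Finset.sum_congr rfl fun r _ => by ring
      · rw [← Finset.mul_sum, jointP_tail_sum W PX2 PX12 PV hPX2 hPX12 hPV hW s', mul_one]
    · simp [h]
  · rw [Finset.sum_ite_eq' Finset.univ s QS]
    simp
end JointFacts

noncomputable section MixConstruction

variable {𝒮 𝒳₁ 𝒳₂ 𝒴 : Type*} {𝒱₁ 𝒱₂ : Type}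

/-- mixed marginal of `X₂`. -/
def mixPX2 (a b : ℝ) (P1 P2 : 𝒳₂ → ℝ) : 𝒳₂ → ℝ := fun x2 => a * P1 x2 + b * P2 x2

/-- mixed joint of `(X₁, X₂)` (unnormalized numerator). -/
def mixNum (a b : ℝ) (P1 P2 : 𝒳₂ → ℝ) (Q1 Q2 : 𝒳₁ → 𝒳₂ → ℝ) : 𝒳₁ → 𝒳₂ → ℝ :=
  fun x1 x2 => a * P1 x2 * Q1 x1 x2 + b * P2 x2 * Q2 x1 x2

/-- mixed conditional of `X₁` given `X₂`. -/
def mixPX12 (a b : ℝ) (P1 P2 : 𝒳₂ → ℝ) (Q1 Q2 : 𝒳₁ → 𝒳₂ → ℝ) : 𝒳₁ → 𝒳₂ → ℝ :=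
  fun x1 x2 => if mixPX2 a b P1 P2 x2 = 0 then Q1 x1 x2
    else mixNum a b P1 P2 Q1 Q2 x1 x2 / mixPX2 a b P1 P2 x2

/-- mixed conditional of `V = 𝒱₁ ⊕ 𝒱₂` given `(S, X₁, X₂)`. -/
def mixPV (a b : ℝ) (P1 P2 : 𝒳₂ → ℝ) (Q1 Q2 : 𝒳₁ → 𝒳₂ → ℝ)
    (R1 : 𝒮 → 𝒳₁ → 𝒳₂ → 𝒱₁ → ℝ) (R2 : 𝒮 → 𝒳₁ → 𝒳₂ → 𝒱₂ → ℝ) :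
    𝒮 → 𝒳₁ → 𝒳₂ → (𝒱₁ ⊕ 𝒱₂) → ℝ :=
  fun s x1 x2 v =>
    Sum.elim
      (fun v1 => (if mixNum a b P1 P2 Q1 Q2 x1 x2 = 0 then a
        else a * P1 x2 * Q1 x1 x2 / mixNum a b P1 P2 Q1 Q2 x1 x2) * R1 s x1 x2 v1)
      (fun v2 => (if mixNum a b P1 P2 Q1 Q2 x1 x2 = 0 then b
        else b * P2 x2 * Q2 x1 x2 / mixNum a b P1 P2 Q1 Q2 x1 x2) * R2 s x1 x2 v2) v

variable {a b : ℝ} {P1 P2 : 𝒳₂ → ℝ} {Q1 Q2 : 𝒳₁ → 𝒳₂ → ℝ}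
  {R1 : 𝒮 → 𝒳₁ → 𝒳₂ → 𝒱₁ → ℝ} {R2 : 𝒮 → 𝒳₁ → 𝒳₂ → 𝒱₂ → ℝ}

lemma mixPX2_nonneg (ha : 0 ≤ a) (hb : 0 ≤ b) (h1 : ∀ x2, 0 ≤ P1 x2) (h2 : ∀ x2, 0 ≤ P2 x2)
    (x2 : 𝒳₂) : 0 ≤ mixPX2 a b P1 P2 x2 := by
  have := h1 x2; have := h2 x2
  unfold mixPX2; positivity

lemma mixNum_nonneg (ha : 0 ≤ a) (hb : 0 ≤ b) (h1 : ∀ x2, 0 ≤ P1 x2) (h2 : ∀ x2, 0 ≤ P2 x2)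
    (hq1 : ∀ x1 x2, 0 ≤ Q1 x1 x2) (hq2 : ∀ x1 x2, 0 ≤ Q2 x1 x2) (x1 : 𝒳₁) (x2 : 𝒳₂) :
    0 ≤ mixNum a b P1 P2 Q1 Q2 x1 x2 := by
  have := h1 x2; have := h2 x2; have := hq1 x1 x2; have := hq2 x1 x2
  unfold mixNum; positivity

lemma mixPX2_sum [Fintype 𝒳₂] (hab : a + b = 1) (h1 : ∑ x2, P1 x2 = 1) (h2 : ∑ x2, P2 x2 = 1) :
    ∑ x2, mixPX2 a b P1 P2 x2 = 1 := by
  unfold mixPX2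
  rw [Finset.sum_add_distrib, ← Finset.mul_sum, ← Finset.mul_sum, h1, h2, mul_one, mul_one, hab]

lemma mixPX12_nonneg (ha : 0 ≤ a) (hb : 0 ≤ b) (h1 : ∀ x2, 0 ≤ P1 x2) (h2 : ∀ x2, 0 ≤ P2 x2)
    (hq1 : ∀ x1 x2, 0 ≤ Q1 x1 x2) (hq2 : ∀ x1 x2, 0 ≤ Q2 x1 x2) (x1 : 𝒳₁) (x2 : 𝒳₂) :
    0 ≤ mixPX12 a b P1 P2 Q1 Q2 x1 x2 := by
  unfold mixPX12
  split
  · exact hq1 x1 x2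
  · exact div_nonneg (mixNum_nonneg ha hb h1 h2 hq1 hq2 x1 x2) (mixPX2_nonneg ha hb h1 h2 x2)

lemma mixPX12_sum [Fintype 𝒳₁] (hq1 : ∀ x2, ∑ x1, Q1 x1 x2 = 1) (hq2 : ∀ x2, ∑ x1, Q2 x1 x2 = 1)
    (x2 : 𝒳₂) : ∑ x1, mixPX12 a b P1 P2 Q1 Q2 x1 x2 = 1 := by
  unfold mixPX12
  by_cases h : mixPX2 a b P1 P2 x2 = 0
  · simp only [if_pos h]; exact hq1 x2
  · simp only [if_neg h]
    rw [← Finset.sum_div]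
    unfold mixNum
    rw [Finset.sum_add_distrib, ← Finset.mul_sum, ← Finset.mul_sum, hq1, hq2, mul_one, mul_one]
    show mixPX2 a b P1 P2 x2 / mixPX2 a b P1 P2 x2 = 1
    exact div_self h

lemma mixPV_nonneg (ha : 0 ≤ a) (hb : 0 ≤ b) (h1 : ∀ x2, 0 ≤ P1 x2) (h2 : ∀ x2, 0 ≤ P2 x2)
    (hq1 : ∀ x1 x2, 0 ≤ Q1 x1 x2) (hq2 : ∀ x1 x2, 0 ≤ Q2 x1 x2)
    (hr1 : ∀ s x1 x2 v, 0 ≤ R1 s x1 x2 v) (hr2 : ∀ s x1 x2 v, 0 ≤ R2 s x1 x2 v)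
    (s : 𝒮) (x1 : 𝒳₁) (x2 : 𝒳₂) (v : 𝒱₁ ⊕ 𝒱₂) :
    0 ≤ mixPV a b P1 P2 Q1 Q2 R1 R2 s x1 x2 v := by
  rcases v with v | v <;> unfold mixPV <;> simp only [Sum.elim_inl, Sum.elim_inr]
  · refine mul_nonneg ?_ (hr1 s x1 x2 v)
    split
    · exact ha
    · have := h1 x2; have := hq1 x1 x2
      exact div_nonneg (by positivity) (mixNum_nonneg ha hb h1 h2 hq1 hq2 x1 x2)
  · refine mul_nonneg ?_ (hr2 s x1 x2 v)
    split
    · exact hb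
    · have := h2 x2; have := hq2 x1 x2
      exact div_nonneg (by positivity) (mixNum_nonneg ha hb h1 h2 hq1 hq2 x1 x2)

lemma mixPV_sum [Fintype 𝒱₁] [Fintype 𝒱₂] (hab : a + b = 1)
    (hr1 : ∀ s x1 x2, ∑ v, R1 s x1 x2 v = 1) (hr2 : ∀ s x1 x2, ∑ v, R2 s x1 x2 v = 1)
    (s : 𝒮) (x1 : 𝒳₁) (x2 : 𝒳₂) :
    ∑ v, mixPV a b P1 P2 Q1 Q2 R1 R2 s x1 x2 v = 1 := by
  unfold mixPV
  rw [Fintype.sum_sum_type]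
  simp only [Sum.elim_inl, Sum.elim_inr]
  rw [← Finset.mul_sum, ← Finset.mul_sum, hr1, hr2, mul_one, mul_one]
  by_cases h : mixNum a b P1 P2 Q1 Q2 x1 x2 = 0
  · rw [if_pos h, if_pos h, hab]
  · rw [if_neg h, if_neg h, ← add_div]
    show mixNum a b P1 P2 Q1 Q2 x1 x2 / mixNum a b P1 P2 Q1 Q2 x1 x2 = 1
    exact div_self h

/-- key identity: the mixed joint pmf is the disjoint mixture of the two joint pmfs. -/
lemma mix_key_left {QS : 𝒮 → ℝ} {W : 𝒴 → 𝒳₁ → 𝒳₂ → 𝒮 → ℝ}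
    (ha : 0 ≤ a) (hb : 0 ≤ b) (h1 : ∀ x2, 0 ≤ P1 x2) (h2 : ∀ x2, 0 ≤ P2 x2)
    (hq1 : ∀ x1 x2, 0 ≤ Q1 x1 x2) (hq2 : ∀ x1 x2, 0 ≤ Q2 x1 x2)
    (ω : 𝒮 × 𝒱₁ × 𝒳₁ × 𝒳₂ × 𝒴) :
    jointP QS W (mixPX2 a b P1 P2) (mixPX12 a b P1 P2 Q1 Q2) (mixPV a b P1 P2 Q1 Q2 R1 R2)
        (ω.1, Sum.inl ω.2.1, ω.2.2.1, ω.2.2.2.1, ω.2.2.2.2)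
      = a * jointP QS W P1 Q1 R1 ω := by
  obtain ⟨s, v, x1, x2, y⟩ := ω
  show QS s * mixPX2 a b P1 P2 x2 * mixPX12 a b P1 P2 Q1 Q2 x1 x2 *
      ((if mixNum a b P1 P2 Q1 Q2 x1 x2 = 0 then a
        else a * P1 x2 * Q1 x1 x2 / mixNum a b P1 P2 Q1 Q2 x1 x2) * R1 s x1 x2 v) * W y x1 x2 s
    = a * (QS s * P1 x2 * Q1 x1 x2 * R1 s x1 x2 v * W y x1 x2 s)
  have main : mixPX2 a b P1 P2 x2 * mixPX12 a b P1 P2 Q1 Q2 x1 x2 *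
      (if mixNum a b P1 P2 Q1 Q2 x1 x2 = 0 then a
        else a * P1 x2 * Q1 x1 x2 / mixNum a b P1 P2 Q1 Q2 x1 x2)
      = a * P1 x2 * Q1 x1 x2 := by
    by_cases hz : mixPX2 a b P1 P2 x2 = 0
    · have hP1 : a * P1 x2 = 0 := by
        have e1 : 0 ≤ a * P1 x2 := mul_nonneg ha (h1 x2)
        have e2 : 0 ≤ b * P2 x2 := mul_nonneg hb (h2 x2)
        have : a * P1 x2 + b * P2 x2 = 0 := hz
        linarith
      rw [hz, zero_mul, zero_mul, show a * P1 x2 * Q1 x1 x2 = a * P1 x2 * Q1 x1 x2 from rfl,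
        hP1, zero_mul]
    · rw [show mixPX12 a b P1 P2 Q1 Q2 x1 x2
          = mixNum a b P1 P2 Q1 Q2 x1 x2 / mixPX2 a b P1 P2 x2 from if_neg hz,
        mul_div_assoc', mul_comm (mixPX2 a b P1 P2 x2), mul_div_assoc, div_self hz, mul_one]
      by_cases hn : mixNum a b P1 P2 Q1 Q2 x1 x2 = 0
      · have hz1 : a * P1 x2 * Q1 x1 x2 = 0 := by
          have e1 : 0 ≤ a * P1 x2 * Q1 x1 x2 := by
            have := h1 x2; have := hq1 x1 x2; positivity
          have e2 : 0 ≤ b * P2 x2 * Q2 x1 x2 := by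
            have := h2 x2; have := hq2 x1 x2; positivity
          have : a * P1 x2 * Q1 x1 x2 + b * P2 x2 * Q2 x1 x2 = 0 := hn
          linarith
        rw [if_pos hn, hn, zero_mul, hz1]
      · rw [if_neg hn, mul_comm, div_mul_cancel₀ _ hn]
  calc QS s * mixPX2 a b P1 P2 x2 * mixPX12 a b P1 P2 Q1 Q2 x1 x2 *
        ((if mixNum a b P1 P2 Q1 Q2 x1 x2 = 0 then a
          else a * P1 x2 * Q1 x1 x2 / mixNum a b P1 P2 Q1 Q2 x1 x2) * R1 s x1 x2 v) * W y x1 x2 s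
      = QS s * (mixPX2 a b P1 P2 x2 * mixPX12 a b P1 P2 Q1 Q2 x1 x2 *
        (if mixNum a b P1 P2 Q1 Q2 x1 x2 = 0 then a
          else a * P1 x2 * Q1 x1 x2 / mixNum a b P1 P2 Q1 Q2 x1 x2)) * R1 s x1 x2 v
          * W y x1 x2 s := by ring
    _ = QS s * (a * P1 x2 * Q1 x1 x2) * R1 s x1 x2 v * W y x1 x2 s := by rw [main]
    _ = a * (QS s * P1 x2 * Q1 x1 x2 * R1 s x1 x2 v * W y x1 x2 s) := by ring

lemma mix_key_right {QS : 𝒮 → ℝ} {W : 𝒴 → 𝒳₁ → 𝒳₂ → 𝒮 → ℝ}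
    (ha : 0 ≤ a) (hb : 0 ≤ b) (h1 : ∀ x2, 0 ≤ P1 x2) (h2 : ∀ x2, 0 ≤ P2 x2)
    (hq1 : ∀ x1 x2, 0 ≤ Q1 x1 x2) (hq2 : ∀ x1 x2, 0 ≤ Q2 x1 x2)
    (ω : 𝒮 × 𝒱₂ × 𝒳₁ × 𝒳₂ × 𝒴) :
    jointP QS W (mixPX2 a b P1 P2) (mixPX12 a b P1 P2 Q1 Q2) (mixPV a b P1 P2 Q1 Q2 R1 R2)
        (ω.1, Sum.inr ω.2.1, ω.2.2.1, ω.2.2.2.1, ω.2.2.2.2)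
      = b * jointP QS W P2 Q2 R2 ω := by
  obtain ⟨s, v, x1, x2, y⟩ := ω
  show QS s * mixPX2 a b P1 P2 x2 * mixPX12 a b P1 P2 Q1 Q2 x1 x2 *
      ((if mixNum a b P1 P2 Q1 Q2 x1 x2 = 0 then b
        else b * P2 x2 * Q2 x1 x2 / mixNum a b P1 P2 Q1 Q2 x1 x2) * R2 s x1 x2 v) * W y x1 x2 s
    = b * (QS s * P2 x2 * Q2 x1 x2 * R2 s x1 x2 v * W y x1 x2 s)
  have main : mixPX2 a b P1 P2 x2 * mixPX12 a b P1 P2 Q1 Q2 x1 x2 *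
      (if mixNum a b P1 P2 Q1 Q2 x1 x2 = 0 then b
        else b * P2 x2 * Q2 x1 x2 / mixNum a b P1 P2 Q1 Q2 x1 x2)
      = b * P2 x2 * Q2 x1 x2 := by
    by_cases hz : mixPX2 a b P1 P2 x2 = 0
    · have hP2 : b * P2 x2 = 0 := by
        have e1 : 0 ≤ a * P1 x2 := mul_nonneg ha (h1 x2)
        have e2 : 0 ≤ b * P2 x2 := mul_nonneg hb (h2 x2)
        have : a * P1 x2 + b * P2 x2 = 0 := hz
        linarith
      rw [hz, zero_mul, zero_mul, hP2, zero_mul]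
    · rw [show mixPX12 a b P1 P2 Q1 Q2 x1 x2
          = mixNum a b P1 P2 Q1 Q2 x1 x2 / mixPX2 a b P1 P2 x2 from if_neg hz,
        mul_div_assoc', mul_comm (mixPX2 a b P1 P2 x2), mul_div_assoc, div_self hz, mul_one]
      by_cases hn : mixNum a b P1 P2 Q1 Q2 x1 x2 = 0
      · have hz2 : b * P2 x2 * Q2 x1 x2 = 0 := by
          have e1 : 0 ≤ a * P1 x2 * Q1 x1 x2 := by
            have := h1 x2; have := hq1 x1 x2; positivity
          have e2 : 0 ≤ b * P2 x2 * Q2 x1 x2 := by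
            have := h2 x2; have := hq2 x1 x2; positivity
          have : a * P1 x2 * Q1 x1 x2 + b * P2 x2 * Q2 x1 x2 = 0 := hn
          linarith
        rw [if_pos hn, hn, zero_mul, hz2]
      · rw [if_neg hn, mul_comm, div_mul_cancel₀ _ hn]
  calc QS s * mixPX2 a b P1 P2 x2 * mixPX12 a b P1 P2 Q1 Q2 x1 x2 *
        ((if mixNum a b P1 P2 Q1 Q2 x1 x2 = 0 then b
          else b * P2 x2 * Q2 x1 x2 / mixNum a b P1 P2 Q1 Q2 x1 x2) * R2 s x1 x2 v) * W y x1 x2 s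
      = QS s * (mixPX2 a b P1 P2 x2 * mixPX12 a b P1 P2 Q1 Q2 x1 x2 *
        (if mixNum a b P1 P2 Q1 Q2 x1 x2 = 0 then b
          else b * P2 x2 * Q2 x1 x2 / mixNum a b P1 P2 Q1 Q2 x1 x2)) * R2 s x1 x2 v
          * W y x1 x2 s := by ring
    _ = QS s * (b * P2 x2 * Q2 x1 x2) * R2 s x1 x2 v * W y x1 x2 s := by rw [main]
    _ = b * (QS s * P2 x2 * Q2 x1 x2 * R2 s x1 x2 v * W y x1 x2 s) := by ring

/-- splitting the sum over `𝒮 × (𝒱₁ ⊕ 𝒱₂) × 𝒳₁ × 𝒳₂ × 𝒴`. -/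
def mixEquiv (𝒮 𝒱₁ 𝒱₂ 𝒳₁ 𝒳₂ 𝒴 : Type*) :
    ((𝒮 × 𝒱₁ × 𝒳₁ × 𝒳₂ × 𝒴) ⊕ (𝒮 × 𝒱₂ × 𝒳₁ × 𝒳₂ × 𝒴)) ≃ (𝒮 × (𝒱₁ ⊕ 𝒱₂) × 𝒳₁ × 𝒳₂ × 𝒴) where
  toFun x := match x with
    | .inl (s, v, r) => (s, .inl v, r)
    | .inr (s, v, r) => (s, .inr v, r)
  invFun x := match x with
    | (s, .inl v, r) => .inl (s, v, r)
    | (s, .inr v, r) => .inr (s, v, r)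
  left_inv := by rintro (⟨s, v, r⟩ | ⟨s, v, r⟩) <;> rfl
  right_inv := by rintro ⟨s, v | v, r⟩ <;> rfl

lemma mix_sum_split [Fintype 𝒮] [Fintype 𝒱₁] [Fintype 𝒱₂] [Fintype 𝒳₁] [Fintype 𝒳₂] [Fintype 𝒴]
    (F : 𝒮 × (𝒱₁ ⊕ 𝒱₂) × 𝒳₁ × 𝒳₂ × 𝒴 → ℝ) :
    ∑ ω, F ω
      = (∑ ω : 𝒮 × 𝒱₁ × 𝒳₁ × 𝒳₂ × 𝒴, F (ω.1, Sum.inl ω.2.1, ω.2.2.1, ω.2.2.2.1, ω.2.2.2.2))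
        + ∑ ω : 𝒮 × 𝒱₂ × 𝒳₁ × 𝒳₂ × 𝒴, F (ω.1, Sum.inr ω.2.1, ω.2.2.1, ω.2.2.2.1, ω.2.2.2.2) := by
  rw [← Equiv.sum_comp (mixEquiv 𝒮 𝒱₁ 𝒱₂ 𝒳₁ 𝒳₂ 𝒴) F, Fintype.sum_sum_type]
  rfl

end MixConstruction

noncomputable section MainAssembly

/-- Mixing two `RoutW` witnesses by time sharing on `𝒱₁ ⊕ 𝒱₂`. -/
lemma RoutW_mix {𝒮 𝒳₁ 𝒳₂ 𝒴 : Type*} [Fintype 𝒮] [Fintype 𝒳₁] [Fintype 𝒳₂] [Fintype 𝒴]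
    (QS : 𝒮 → ℝ) (W : 𝒴 → 𝒳₁ → 𝒳₂ → 𝒮 → ℝ)
    (hQ0 : ∀ s, 0 ≤ QS s) (hQ1 : ∑ s, QS s = 1)
    (hW0 : ∀ y x1 x2 s, 0 ≤ W y x1 x2 s) (hW1 : ∀ x1 x2 s, ∑ y, W y x1 x2 s = 1)
    {𝒱₁ 𝒱₂ : Type} [Fintype 𝒱₁] [Fintype 𝒱₂] {a b Rc1 R11 Rc2 R12 : ℝ}
    (ha : 0 < a) (hb : 0 < b) (hab : a + b = 1)
    (h1 : RoutW QS W 𝒱₁ Rc1 R11) (h2 : RoutW QS W 𝒱₂ Rc2 R12) :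
    RoutW QS W (𝒱₁ ⊕ 𝒱₂) (a * Rc1 + b * Rc2) (a * R11 + b * R12) := by
  obtain ⟨P1, Q1, R1, hP1_0, hP1_1, hQ1_0, hQ1_1, hR1_0, hR1_1, c11, c12, c13⟩ := h1
  obtain ⟨P2, Q2, R2, hP2_0, hP2_1, hQ2_0, hQ2_1, hR2_0, hR2_1, c21, c22, c23⟩ := h2
  set pp := jointP QS W P1 Q1 R1 with hppdef
  set qq := jointP QS W P2 Q2 R2 with hqqdef
  set m := jointP QS W (mixPX2 a b P1 P2) (mixPX12 a b P1 P2 Q1 Q2)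
    (mixPV a b P1 P2 Q1 Q2 R1 R2) with hmdef
  -- pmf facts
  have hpp0 : ∀ ω, 0 ≤ pp ω := jointP_nonneg QS W P1 Q1 R1 hQ0 hW0 hP1_0 hQ1_0 hR1_0
  have hqq0 : ∀ ω, 0 ≤ qq ω := jointP_nonneg QS W P2 Q2 R2 hQ0 hW0 hP2_0 hQ2_0 hR2_0
  have hpp1 : ∑ ω, pp ω = 1 := jointP_sum QS W P1 Q1 R1 hP1_1 hQ1_1 hR1_1 hW1 hQ1
  have hqq1 : ∑ ω, qq ω = 1 := jointP_sum QS W P2 Q2 R2 hP2_1 hQ2_1 hR2_1 hW1 hQ1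
  -- the sum-splitting and the mixture identity
  have hsum : ∀ F : 𝒮 × (𝒱₁ ⊕ 𝒱₂) × 𝒳₁ × 𝒳₂ × 𝒴 → ℝ,
      ∑ ω, F ω
        = (∑ ω : 𝒮 × 𝒱₁ × 𝒳₁ × 𝒳₂ × 𝒴, F (ω.1, Sum.inl ω.2.1, ω.2.2.1, ω.2.2.2.1, ω.2.2.2.2))
          + ∑ ω : 𝒮 × 𝒱₂ × 𝒳₁ × 𝒳₂ × 𝒴, F (ω.1, Sum.inr ω.2.1, ω.2.2.1, ω.2.2.2.1, ω.2.2.2.2) :=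
    fun F => mix_sum_split F
  have hm1 : ∀ ω : 𝒮 × 𝒱₁ × 𝒳₁ × 𝒳₂ × 𝒴,
      m (ω.1, Sum.inl ω.2.1, ω.2.2.1, ω.2.2.2.1, ω.2.2.2.2) = a * pp ω :=
    fun ω => mix_key_left ha.le hb.le hP1_0 hP2_0 hQ1_0 hQ2_0 ω
  have hm2 : ∀ ω : 𝒮 × 𝒱₂ × 𝒳₁ × 𝒳₂ × 𝒴,
      m (ω.1, Sum.inr ω.2.1, ω.2.2.1, ω.2.2.2.1, ω.2.2.2.2) = b * qq ω :=
    fun ω => mix_key_right ha.le hb.le hP1_0 hP2_0 hQ1_0 hQ2_0 ω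
  -- entropy decompositions (all variables containing V)
  have EA : ent m (fun ω => ((ω.2.1, ω.2.2.2.1), ω.2.2.2.2))
      = a * ent pp (fun ω => ((ω.2.1, ω.2.2.2.1), ω.2.2.2.2))
        + b * ent qq (fun ω => ((ω.2.1, ω.2.2.2.1), ω.2.2.2.2))
        - (a * Real.logb 2 a + b * Real.logb 2 b) :=
    ent_mix hsum hm1 hm2 hpp0 hpp1 hqq0 hqq1 ha hb _ _ _
      (fun r => ((Sum.inl r.1.1, r.1.2), r.2)) (fun r => ((Sum.inr r.1.1, r.1.2), r.2))
      (fun r r' h => by simpa [Prod.ext_iff] using h)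
      (fun r r' h => by simpa [Prod.ext_iff] using h)
      (fun r r' => by simp [Prod.ext_iff])
      (fun ω => rfl) (fun ω => rfl)
  have EB : ent m (fun ω => ((ω.2.1, ω.2.2.2.1), ω.1))
      = a * ent pp (fun ω => ((ω.2.1, ω.2.2.2.1), ω.1))
        + b * ent qq (fun ω => ((ω.2.1, ω.2.2.2.1), ω.1))
        - (a * Real.logb 2 a + b * Real.logb 2 b) :=
    ent_mix hsum hm1 hm2 hpp0 hpp1 hqq0 hqq1 ha hb _ _ _
      (fun r => ((Sum.inl r.1.1, r.1.2), r.2)) (fun r => ((Sum.inr r.1.1, r.1.2), r.2))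
      (fun r r' h => by simpa [Prod.ext_iff] using h)
      (fun r r' h => by simpa [Prod.ext_iff] using h)
      (fun r r' => by simp [Prod.ext_iff])
      (fun ω => rfl) (fun ω => rfl)
  have EC : ent m (fun ω => (ω.2.2.1, (ω.2.1, ω.2.2.2.1)))
      = a * ent pp (fun ω => (ω.2.2.1, (ω.2.1, ω.2.2.2.1)))
        + b * ent qq (fun ω => (ω.2.2.1, (ω.2.1, ω.2.2.2.1)))
        - (a * Real.logb 2 a + b * Real.logb 2 b) :=
    ent_mix hsum hm1 hm2 hpp0 hpp1 hqq0 hqq1 ha hb _ _ _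
      (fun r => (r.1, (Sum.inl r.2.1, r.2.2))) (fun r => (r.1, (Sum.inr r.2.1, r.2.2)))
      (fun r r' h => by simpa [Prod.ext_iff] using h)
      (fun r r' h => by simpa [Prod.ext_iff] using h)
      (fun r r' => by simp [Prod.ext_iff])
      (fun ω => rfl) (fun ω => rfl)
  have ED : ent m (fun ω => (ω.2.2.2.2, (ω.2.1, ω.2.2.2.1)))
      = a * ent pp (fun ω => (ω.2.2.2.2, (ω.2.1, ω.2.2.2.1)))
        + b * ent qq (fun ω => (ω.2.2.2.2, (ω.2.1, ω.2.2.2.1)))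
        - (a * Real.logb 2 a + b * Real.logb 2 b) :=
    ent_mix hsum hm1 hm2 hpp0 hpp1 hqq0 hqq1 ha hb _ _ _
      (fun r => (r.1, (Sum.inl r.2.1, r.2.2))) (fun r => (r.1, (Sum.inr r.2.1, r.2.2)))
      (fun r r' h => by simpa [Prod.ext_iff] using h)
      (fun r r' h => by simpa [Prod.ext_iff] using h)
      (fun r r' => by simp [Prod.ext_iff])
      (fun ω => rfl) (fun ω => rfl)
  have EE : ent m (fun ω => (ω.2.2.1, ω.2.2.2.2, (ω.2.1, ω.2.2.2.1)))
      = a * ent pp (fun ω => (ω.2.2.1, ω.2.2.2.2, (ω.2.1, ω.2.2.2.1)))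
        + b * ent qq (fun ω => (ω.2.2.1, ω.2.2.2.2, (ω.2.1, ω.2.2.2.1)))
        - (a * Real.logb 2 a + b * Real.logb 2 b) :=
    ent_mix hsum hm1 hm2 hpp0 hpp1 hqq0 hqq1 ha hb _ _ _
      (fun r => (r.1, r.2.1, (Sum.inl r.2.2.1, r.2.2.2)))
      (fun r => (r.1, r.2.1, (Sum.inr r.2.2.1, r.2.2.2)))
      (fun r r' h => by simpa [Prod.ext_iff] using h)
      (fun r r' h => by simpa [Prod.ext_iff] using h)
      (fun r r' => by simp [Prod.ext_iff])
      (fun ω => rfl) (fun ω => rfl)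
  have EF : ent m (fun ω => (ω.2.1, ω.2.2.2.1))
      = a * ent pp (fun ω => (ω.2.1, ω.2.2.2.1))
        + b * ent qq (fun ω => (ω.2.1, ω.2.2.2.1))
        - (a * Real.logb 2 a + b * Real.logb 2 b) :=
    ent_mix hsum hm1 hm2 hpp0 hpp1 hqq0 hqq1 ha hb _ _ _
      (fun r => (Sum.inl r.1, r.2)) (fun r => (Sum.inr r.1, r.2))
      (fun r r' h => by simpa [Prod.ext_iff] using h)
      (fun r r' h => by simpa [Prod.ext_iff] using h)
      (fun r r' => by simp [Prod.ext_iff])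
      (fun ω => rfl) (fun ω => rfl)
  have EG : ent m (fun ω => ((ω.2.1, ω.2.2.1, ω.2.2.2.1), ω.2.2.2.2))
      = a * ent pp (fun ω => ((ω.2.1, ω.2.2.1, ω.2.2.2.1), ω.2.2.2.2))
        + b * ent qq (fun ω => ((ω.2.1, ω.2.2.1, ω.2.2.2.1), ω.2.2.2.2))
        - (a * Real.logb 2 a + b * Real.logb 2 b) :=
    ent_mix hsum hm1 hm2 hpp0 hpp1 hqq0 hqq1 ha hb _ _ _
      (fun r => ((Sum.inl r.1.1, r.1.2.1, r.1.2.2), r.2))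
      (fun r => ((Sum.inr r.1.1, r.1.2.1, r.1.2.2), r.2))
      (fun r r' h => by simpa [Prod.ext_iff] using h)
      (fun r r' h => by simpa [Prod.ext_iff] using h)
      (fun r r' => by simp [Prod.ext_iff])
      (fun ω => rfl) (fun ω => rfl)
  have EH : ent m (fun ω => ((ω.2.1, ω.2.2.1, ω.2.2.2.1), ω.1))
      = a * ent pp (fun ω => ((ω.2.1, ω.2.2.1, ω.2.2.2.1), ω.1))
        + b * ent qq (fun ω => ((ω.2.1, ω.2.2.1, ω.2.2.2.1), ω.1))
        - (a * Real.logb 2 a + b * Real.logb 2 b) :=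
    ent_mix hsum hm1 hm2 hpp0 hpp1 hqq0 hqq1 ha hb _ _ _
      (fun r => ((Sum.inl r.1.1, r.1.2.1, r.1.2.2), r.2))
      (fun r => ((Sum.inr r.1.1, r.1.2.1, r.1.2.2), r.2))
      (fun r r' h => by simpa [Prod.ext_iff] using h)
      (fun r r' h => by simpa [Prod.ext_iff] using h)
      (fun r r' => by simp [Prod.ext_iff])
      (fun ω => rfl) (fun ω => rfl)
  -- concavity of entropy in the Y marginal
  have HY : a * ent pp (fun ω => ω.2.2.2.2) + b * ent qq (fun ω => ω.2.2.2.2)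
      ≤ ent m (fun ω => ω.2.2.2.2) :=
    ent_mix_ge hsum hm1 hm2 hpp0 hqq0 ha.le hb.le hab _ _ _ (fun ω => rfl) (fun ω => rfl)
  -- the S marginals agree (all equal QS)
  have hmS : ∀ s, pr m (fun q => q.1) s = QS s :=
    jointP_marg_fst QS W _ _ _ (mixPX2_sum hab hP1_1 hP2_1)
      (mixPX12_sum hQ1_1 hQ2_1) (mixPV_sum hab hR1_1 hR2_1) hW1
  have hpS : ∀ s, pr pp (fun q => q.1) s = QS s :=
    jointP_marg_fst QS W _ _ _ hP1_1 hQ1_1 hR1_1 hW1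
  have hqS : ∀ s, pr qq (fun q => q.1) s = QS s :=
    jointP_marg_fst QS W _ _ _ hP2_1 hQ2_1 hR2_1 hW1
  have HS : ent m (fun q => q.1)
      = a * ent pp (fun q => q.1) + b * ent qq (fun q => q.1) := by
    have e1 : ent m (fun q => q.1) = ent pp (fun q => (q.1 : 𝒮)) :=
      ent_congr fun s => by rw [hmS, hpS]
    have e2 : ent qq (fun q => (q.1 : 𝒮)) = ent pp (fun q => (q.1 : 𝒮)) :=
      ent_congr fun s => by rw [hqS, hpS]
    rw [e1, e2, ← add_mul, hab, one_mul]
  -- expand the witnesses' information constraints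
  simp only [mi, cmi] at c11 c12 c13 c21 c22 c23
  have s11 := mul_le_mul_of_nonneg_left c11 ha.le
  have s21 := mul_le_mul_of_nonneg_left c21 hb.le
  have s12 := mul_le_mul_of_nonneg_left c12 ha.le
  have s22 := mul_le_mul_of_nonneg_left c22 hb.le
  have s13 := mul_le_mul_of_nonneg_left c13 ha.le
  have s23 := mul_le_mul_of_nonneg_left c23 hb.le
  refine ⟨mixPX2 a b P1 P2, mixPX12 a b P1 P2 Q1 Q2, mixPV a b P1 P2 Q1 Q2 R1 R2,
    mixPX2_nonneg ha.le hb.le hP1_0 hP2_0, mixPX2_sum hab hP1_1 hP2_1,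
    mixPX12_nonneg ha.le hb.le hP1_0 hP2_0 hQ1_0 hQ2_0, mixPX12_sum hQ1_1 hQ2_1,
    mixPV_nonneg ha.le hb.le hP1_0 hP2_0 hQ1_0 hQ2_0 hR1_0 hR2_0,
    mixPV_sum hab hR1_1 hR2_1, ?_, ?_, ?_⟩
  · rw [← hmdef]
    simp only [mi]
    linarith [EA, EB, HY, HS, s11, s21]
  · rw [← hmdef]
    simp only [cmi]
    linarith [EC, ED, EE, EF, s12, s22]
  · rw [← hmdef]
    simp only [mi]
    linarith [EG, EH, HY, HS, s13, s23]

end MainAssembly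

/-- **Proposition 2, part 1:** the outer bound region `R^out` is convex. -/
theorem Rout_convex {𝒮 𝒳₁ 𝒳₂ 𝒴 : Type*} [Fintype 𝒮] [Fintype 𝒳₁] [Fintype 𝒳₂] [Fintype 𝒴]
    (QS : 𝒮 → ℝ) (W : 𝒴 → 𝒳₁ → 𝒳₂ → 𝒮 → ℝ)
    (hQ0 : ∀ s, 0 ≤ QS s) (hQ1 : ∑ s, QS s = 1)
    (hW0 : ∀ y x1 x2 s, 0 ≤ W y x1 x2 s) (hW1 : ∀ x1 x2 s, ∑ y, W y x1 x2 s = 1) :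
    Convex ℝ (Rout QS W) := by
  intro x hx y hy a b ha hb hab
  rcases ha.eq_or_lt with rfl | ha'
  · have hb1 : b = 1 := by linarith
    subst hb1
    simpa using hy
  rcases hb.eq_or_lt with rfl | hb'
  · have ha1 : a = 1 := by linarith
    subst ha1
    simpa using hx
  obtain ⟨hx1, hx2, 𝒱₁, i1, hW₁⟩ := hx
  obtain ⟨hy1, hy2, 𝒱₂, i2, hW₂⟩ := hy

  have hco : a • x + b • y = (a * x.1 + b * y.1, a * x.2 + b * y.2) := by
    ext <;> simp [smul_eq_mul]
  rw [hco]
  refine ⟨by positivity, by positivity, 𝒱₁ ⊕ 𝒱₂, inferInstance, ?_⟩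
  exact RoutW_mix QS W hQ0 hQ1 hW0 hW1 ha' hb' hab hW₁ hW₂
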